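/- Let p be a prime and f ∈ KS_{p,2} such that Δ¹f(0)/p is a unit of ℤ_p, and assume additionally, in case p = 2, that Δ²f(0)/4 ∈ 2ℤ_2. Then f satisfies the strong Kummer congruences: ‖f(s) − f(t)‖_p = p^{−1}·‖s − t‖_p for all s, t ∈ ℤ_p. -/

import Mathlib

open Finset

/-- The forward difference operator `Δ_h^n` with increment `h ≥ 1`:
`Δ_h^n f(s) = ∑_{ν=0}^n (n choose ν)·(−1)^(n−ν)·f(s+νh)`. -/
noncomputable def deltaH (p : ℕ) [Fact p.Prime] (h : ℕ) (f : ℤ_[p] → ℤ_[p]) (n : ℕ)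
    (s : ℤ_[p]) : ℤ_[p] :=
  ∑ ν ∈ Finset.range (n + 1),
    (n.choose ν : ℤ_[p]) * (-1) ^ (n - ν) * f (s + (ν : ℤ_[p]) * (h : ℤ_[p]))

/-- `f ∈ KS_{p,2}`: `f` is continuous and satisfies the Kummer type congruences
`Δ^n f(s) ∈ p^n ℤ_p` for all integers `n ≥ 0` and all `s ∈ ℤ_p`. -/
def KS2 (p : ℕ) [Fact p.Prime] (f : ℤ_[p] → ℤ_[p]) : Prop :=
  Continuous f ∧ ∀ (n : ℕ) (s : ℤ_[p]), (p : ℤ_[p]) ^ n ∣ deltaH p 1 f n s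

section helpers

variable {p : ℕ} [hp : Fact p.Prime]

private lemma pd_dvd_iff_norm_le {n : ℕ} {x : ℤ_[p]} :
    (p : ℤ_[p]) ^ n ∣ x ↔ ‖x‖ ≤ (p : ℝ) ^ (-n : ℤ) := by
  rw [PadicInt.norm_le_pow_iff_mem_span_pow, Ideal.mem_span_singleton]

private lemma pd_add_norm_eq {a b : ℤ_[p]} (h : ‖b‖ < ‖a‖) : ‖a + b‖ = ‖a‖ := by
  refine le_antisymm ((PadicInt.nonarchimedean a b).trans (max_le le_rfl h.le)) ?_
  by_contra hlt
  push_neg at hlt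
  have h2 : ‖a‖ ≤ max ‖a + b‖ ‖-b‖ := by
    simpa using PadicInt.nonarchimedean (a + b) (-b)
  rw [norm_neg] at h2
  rcases le_max_iff.mp h2 with h' | h' <;> linarith

private lemma pd_one_lt : (1 : ℝ) < (p : ℝ) := by exact_mod_cast hp.out.one_lt

private lemma pd_pRne : ((p : ℝ)) ≠ 0 := by
  have := hp.out.pos
  positivity

private lemma pd_zpow_lt {a b : ℤ} (h : a < b) : (p : ℝ) ^ a < (p : ℝ) ^ b :=
  zpow_lt_zpow_right₀ pd_one_lt h

private lemma pd_norm_natCast {c : ℕ} (hc : c ≠ 0) :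
    ‖(c : ℤ_[p])‖ = (p : ℝ) ^ (-(c.factorization p : ℤ)) := by
  obtain ⟨d, hd, hdp⟩ : ∃ d : ℕ, p ^ c.factorization p * d = c ∧ ¬ p ∣ d :=
    ⟨c / p ^ c.factorization p, Nat.ordProj_mul_ordCompl_eq_self c p,
      Nat.not_dvd_ordCompl hp.out hc⟩
  have hce : (c : ℤ_[p]) = (p : ℤ_[p]) ^ c.factorization p * (d : ℤ_[p]) := by
    rw [← Nat.cast_pow, ← Nat.cast_mul, hd]
  have hdn : ‖(d : ℤ_[p])‖ = 1 := by
    refine le_antisymm (PadicInt.norm_le_one _) ?_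
    by_contra hlt
    push_neg at hlt
    have h1 : ‖((d : ℤ) : ℤ_[p])‖ < 1 := by rwa [Int.cast_natCast]
    exact hdp (Int.natCast_dvd_natCast.mp ((PadicInt.norm_int_lt_one_iff_dvd (d : ℤ)).mp h1))
  rw [hce, norm_mul, PadicInt.norm_p_pow, hdn, mul_one]

private lemma pd_choose_dvd {m c k : ℕ} (hk : k ≠ 0) (hmc : p ^ m ∣ c) :
    (p : ℤ_[p]) ^ (m - k.factorization p) ∣ (c.choose k : ℤ_[p]) := by
  suffices h : p ^ (m - k.factorization p) ∣ c.choose k by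
    obtain ⟨d, hd⟩ := h
    exact ⟨d, by rw [← Nat.cast_pow, ← Nat.cast_mul, ← hd]⟩
  rcases Nat.eq_zero_or_pos (c.choose k) with h0 | hpos
  · simp [h0]
  have hkc : k ≤ c := by
    by_contra hh
    push_neg at hh
    rw [Nat.choose_eq_zero_of_lt hh] at hpos
    omega
  obtain ⟨c', rfl⟩ : ∃ c', c = c' + 1 := ⟨c - 1, by omega⟩
  obtain ⟨k', rfl⟩ : ∃ k', k = k' + 1 := ⟨k - 1, by omega⟩
  have hid : (c' + 1) * c'.choose k' = (c' + 1).choose (k' + 1) * (k' + 1) :=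
    Nat.add_one_mul_choose_eq c' k'
  have key : p ^ m ∣ (c' + 1).choose (k' + 1) * (k' + 1) := by
    rw [← hid]
    exact hmc.trans (Dvd.intro _ rfl)
  have hne : (c' + 1).choose (k' + 1) * (k' + 1) ≠ 0 := by positivity
  have hle := (Nat.Prime.pow_dvd_iff_le_factorization hp.out hne).mp key
  rw [Nat.factorization_mul hpos.ne' (by omega), Finsupp.add_apply] at hle
  refine (Nat.Prime.pow_dvd_iff_le_factorization hp.out hpos.ne').mpr ?_
  omega

private lemma pd_fact_lt {k : ℕ} (hk : k ≠ 0) : k.factorization p < k :=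
  calc k.factorization p < 2 ^ k.factorization p := Nat.lt_two_pow_self
  _ ≤ p ^ k.factorization p := Nat.pow_le_pow_left hp.out.two_le _
  _ ≤ k := Nat.ordProj_le p hk

private lemma pd_aux2 : ∀ v, 2 ≤ v → v + 2 ≤ 2 ^ v := by
  intro v hv
  induction v with
  | zero => omega
  | succ n ih =>
    rcases Nat.lt_or_ge n 2 with h | h
    · interval_cases n
      · omega
      · norm_num
    · have h1 := ih h
      have h2 : 2 ^ (n + 1) = 2 * 2 ^ n := by ring
      omega

private lemma pd_fact_le_sub_two {k : ℕ} (hk : 2 ≤ k) (hpk : p = 2 → k ≠ 2) :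
    k.factorization p ≤ k - 2 := by
  rcases eq_or_lt_of_le hk with h2 | h3
  · have hk2 : k = 2 := h2.symm
    subst hk2
    have hp2 : p ≠ 2 := fun h => hpk h rfl
    have hnd : ¬ p ∣ 2 := fun hdvd =>
      hp2 ((Nat.prime_dvd_prime_iff_eq hp.out Nat.prime_two).mp hdvd)
    rw [Nat.factorization_eq_zero_of_not_dvd hnd]
  · by_contra hcon
    push_neg at hcon
    have hlt := pd_fact_lt (p := p) (k := k) (by omega)
    have hv2 : k.factorization p = k - 1 := by omega
    have h1 : p ^ (k - 1) ≤ k := by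
      have := Nat.ordProj_le p (n := k) (by omega)
      rwa [hv2] at this
    have hb : (k - 1) + 2 ≤ 2 ^ (k - 1) := pd_aux2 _ (by omega)
    have hc : 2 ^ (k - 1) ≤ p ^ (k - 1) := Nat.pow_le_pow_left hp.out.two_le _
    omega

private lemma pd_cont_iter {f : ℤ_[p] → ℤ_[p]} (hf : Continuous f) (n : ℕ) :
    Continuous ((fwdDiff (1 : ℤ_[p]))^[n] f) := by
  induction n with
  | zero => exact hf
  | succ n ih =>
    rw [Function.iterate_succ_apply']
    exact (ih.comp (continuous_id.add continuous_const)).sub ih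

private lemma pd_dense_ext (g : ℤ_[p] → ℤ_[p]) (hg : Continuous g) (n : ℕ)
    (h : ∀ c : ℕ, (p : ℤ_[p]) ^ n ∣ g c) (s : ℤ_[p]) : (p : ℤ_[p]) ^ n ∣ g s := by
  rw [pd_dvd_iff_norm_le]
  have hS : IsClosed {x : ℤ_[p] | ‖g x‖ ≤ (p : ℝ) ^ (-n : ℤ)} :=
    isClosed_le hg.norm continuous_const
  have hsub : Set.range (Nat.cast : ℕ → ℤ_[p]) ⊆ {x : ℤ_[p] | ‖g x‖ ≤ (p : ℝ) ^ (-n : ℤ)} := by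
    rintro _ ⟨c, rfl⟩
    exact pd_dvd_iff_norm_le.mp (h c)
  have hmem : s ∈ closure (Set.range (Nat.cast : ℕ → ℤ_[p])) := by
    rw [PadicInt.denseRange_natCast.closure_eq]
    trivial
  exact hS.closure_subset_iff.mpr hsub hmem

private lemma pd_shift (f : ℤ_[p] → ℤ_[p]) (j : ℕ) (s : ℤ_[p]) (c : ℕ) :
    (fwdDiff (1 : ℤ_[p]))^[j] f (s + c) =
      ∑ k ∈ range (c + 1), c.choose k • (fwdDiff (1 : ℤ_[p]))^[j + k] f s := by
  have h := shift_eq_sum_fwdDiff_iter (1 : ℤ_[p]) ((fwdDiff (1 : ℤ_[p]))^[j] f) c s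
  rw [nsmul_one] at h
  rw [h]
  refine Finset.sum_congr rfl fun k _ => ?_
  rw [add_comm j k, Function.iterate_add_apply]

private lemma pd_expand (f : ℤ_[p] → ℤ_[p]) (s : ℤ_[p]) (c : ℕ) :
    f (s + c) - f s =
      ∑ i ∈ range c, c.choose (i + 1) • (fwdDiff (1 : ℤ_[p]))^[i + 1] f s := by
  have h := pd_shift f 0 s c
  simp only [Function.iterate_zero_apply, zero_add] at h
  rw [h, Finset.sum_range_succ']
  simp

private lemma pd_lip_nat {f : ℤ_[p] → ℤ_[p]}
    (hdvd : ∀ (n : ℕ) (s : ℤ_[p]), (p : ℤ_[p]) ^ n ∣ (fwdDiff (1 : ℤ_[p]))^[n] f s)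
    (m : ℕ) (s : ℤ_[p]) (c : ℕ) (hc : p ^ m ∣ c) :
    (p : ℤ_[p]) ^ (m + 1) ∣ f (s + c) - f s := by
  rw [pd_expand]
  refine Finset.dvd_sum fun i _ => ?_
  have hv : (i + 1).factorization p + 1 ≤ i + 1 := pd_fact_lt (by omega)
  have h1 : (p : ℤ_[p]) ^ (m - (i + 1).factorization p) ∣ (c.choose (i + 1) : ℤ_[p]) :=
    pd_choose_dvd (by omega) hc
  have h2 := hdvd (i + 1) s
  have hexp : m + 1 ≤ (m - (i + 1).factorization p) + (i + 1) := by omega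
  rw [nsmul_eq_mul]
  refine dvd_trans (pow_dvd_pow _ hexp) ?_
  rw [pow_add]
  exact mul_dvd_mul h1 h2

private lemma pd_lip {f : ℤ_[p] → ℤ_[p]} (hfc : Continuous f)
    (hdvd : ∀ (n : ℕ) (s : ℤ_[p]), (p : ℤ_[p]) ^ n ∣ (fwdDiff (1 : ℤ_[p]))^[n] f s)
    (m : ℕ) (x y : ℤ_[p]) (h : (p : ℤ_[p]) ^ m ∣ x - y) :
    ‖f x - f y‖ ≤ (p : ℝ) ^ (-(m + 1 : ℕ) : ℤ) := by
  obtain ⟨w, hw⟩ := h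
  have hδ : (0 : ℝ) < (p : ℝ) ^ (-(m + 1 : ℕ) : ℤ) :=
    zpow_pos (by exact_mod_cast hp.out.pos) _
  obtain ⟨ε, hε, hcont⟩ := Metric.continuous_iff.mp hfc x _ hδ
  obtain ⟨c, hc⟩ := PadicInt.denseRange_natCast.exists_dist_lt w hε
  set z : ℤ_[p] := y + ((c * p ^ m : ℕ) : ℤ_[p]) with hz
  have hzx : z - x = (p : ℤ_[p]) ^ m * ((c : ℤ_[p]) - w) := by
    rw [hz]
    push_cast
    rw [mul_sub, ← hw]
    ring
  have hxz : dist z x < ε := by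
    rw [dist_eq_norm, hzx, norm_mul]
    calc ‖(p : ℤ_[p]) ^ m‖ * ‖(c : ℤ_[p]) - w‖ ≤ 1 * ‖(c : ℤ_[p]) - w‖ :=
          mul_le_mul_of_nonneg_right (PadicInt.norm_le_one _) (norm_nonneg _)
    _ = ‖(c : ℤ_[p]) - w‖ := one_mul _
    _ < ε := by rw [← norm_sub_rev]; rwa [dist_eq_norm] at hc
  have h1 : ‖f x - f z‖ < (p : ℝ) ^ (-(m + 1 : ℕ) : ℤ) := by
    have := hcont z hxz
    rwa [dist_eq_norm, ← norm_sub_rev] at this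
  have h2 : ‖f z - f y‖ ≤ (p : ℝ) ^ (-(m + 1 : ℕ) : ℤ) := by
    refine pd_dvd_iff_norm_le.mp ?_
    exact pd_lip_nat hdvd m y (c * p ^ m) ⟨c, mul_comm _ _⟩
  have hsplit : f x - f y = (f x - f z) + (f z - f y) := by ring
  rw [hsplit]
  exact (PadicInt.nonarchimedean _ _).trans (max_le h1.le h2)

private lemma pd_step {f : ℤ_[p] → ℤ_[p]}
    (hdvd : ∀ (n : ℕ) (s : ℤ_[p]), (p : ℤ_[p]) ^ n ∣ (fwdDiff (1 : ℤ_[p]))^[n] f s)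
    (hD1 : ∀ s : ℤ_[p], ‖fwdDiff (1 : ℤ_[p]) f s‖ = (p : ℝ) ^ (-1 : ℤ))
    (hD2 : p = 2 → ∀ s : ℤ_[p], (p : ℤ_[p]) ^ 3 ∣ (fwdDiff (1 : ℤ_[p]))^[2] f s)
    (s : ℤ_[p]) (c : ℕ) (hc : c ≠ 0) :
    ‖f (s + c) - f s‖ = (p : ℝ) ^ (-(c.factorization p : ℤ) - 1) := by
  set m := c.factorization p with hm
  obtain ⟨c', hc'⟩ : ∃ c', c = c' + 1 := ⟨c - 1, by omega⟩
  rw [pd_expand, hc', Finset.sum_range_succ']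
  have hmc : p ^ m ∣ c := Nat.ordProj_dvd c p
  have hA : ‖(c' + 1).choose (0 + 1) • (fwdDiff (1 : ℤ_[p]))^[0 + 1] f s‖
      = (p : ℝ) ^ (-(m : ℤ) - 1) := by
    rw [zero_add, Nat.choose_one_right, nsmul_eq_mul, norm_mul,
      show (((c' + 1 : ℕ)) : ℤ_[p]) = ((c : ℕ) : ℤ_[p]) by rw [hc'],
      pd_norm_natCast hc, Function.iterate_one, hD1, ← zpow_add₀ pd_pRne]
    ring_nf
    rw [← hm]
  have hR : (p : ℤ_[p]) ^ (m + 2) ∣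
      ∑ i ∈ range c', (c' + 1).choose (i + 1 + 1) • (fwdDiff (1 : ℤ_[p]))^[i + 1 + 1] f s := by
    refine Finset.dvd_sum fun i _ => ?_
    rw [nsmul_eq_mul]
    have hmc' : p ^ m ∣ c' + 1 := by rwa [← hc']
    by_cases hcase : p = 2 ∧ i = 0
    · obtain ⟨hp2, rfl⟩ := hcase
      have hv : (0 + 1 + 1 : ℕ).factorization p = 1 := by
        subst hp2
        simpa using Nat.Prime.factorization_self Nat.prime_two
      have h1 := pd_choose_dvd (p := p) (m := m) (c := c' + 1) (k := 0 + 1 + 1)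
        (by omega) hmc'
      rw [hv] at h1
      have h2 := hD2 hp2 s
      refine dvd_trans (pow_dvd_pow _ (show m + 2 ≤ (m - 1) + 3 by omega)) ?_
      rw [pow_add]
      exact mul_dvd_mul h1 h2
    · have hk2 : p = 2 → i + 1 + 1 ≠ 2 := by
        intro hh hk
        exact hcase ⟨hh, by omega⟩
      have hvle : (i + 1 + 1).factorization p ≤ i := by
        have := pd_fact_le_sub_two (p := p) (k := i + 1 + 1) (by omega) hk2
        omega
      have h1 := pd_choose_dvd (p := p) (m := m) (c := c' + 1) (k := i + 1 + 1)
        (by omega) hmc'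
      have h2 := hdvd (i + 1 + 1) s
      refine dvd_trans (pow_dvd_pow _
        (show m + 2 ≤ (m - (i + 1 + 1).factorization p) + (i + 1 + 1) by omega)) ?_
      rw [pow_add]
      exact mul_dvd_mul h1 h2
  have hSA : ‖∑ i ∈ range c', (c' + 1).choose (i + 1 + 1) • (fwdDiff (1 : ℤ_[p]))^[i + 1 + 1] f s‖
      < ‖(c' + 1).choose (0 + 1) • (fwdDiff (1 : ℤ_[p]))^[0 + 1] f s‖ := by
    calc ‖∑ i ∈ range c', (c' + 1).choose (i + 1 + 1) • (fwdDiff (1 : ℤ_[p]))^[i + 1 + 1] f s‖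
        ≤ (p : ℝ) ^ (-(m + 2 : ℕ) : ℤ) := pd_dvd_iff_norm_le.mp hR
    _ < (p : ℝ) ^ (-(m : ℤ) - 1) := pd_zpow_lt (by push_cast; omega)
    _ = _ := hA.symm
  rw [add_comm, pd_add_norm_eq hSA, hA]

private lemma pd_D1_norm {f : ℤ_[p] → ℤ_[p]} (hfc : Continuous f)
    (hdvd : ∀ (n : ℕ) (s : ℤ_[p]), (p : ℤ_[p]) ^ n ∣ (fwdDiff (1 : ℤ_[p]))^[n] f s)
    (u : ℤ_[p]) (hu : IsUnit u) (h1 : (fwdDiff (1 : ℤ_[p]))^[1] f 0 = (p : ℤ_[p]) * u) :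
    ∀ s : ℤ_[p], ‖fwdDiff (1 : ℤ_[p]) f s‖ = (p : ℝ) ^ (-1 : ℤ) := by
  have hcong : ∀ s : ℤ_[p], (p : ℤ_[p]) ^ 2 ∣
      ((fwdDiff (1 : ℤ_[p]))^[1] f s - (fwdDiff (1 : ℤ_[p]))^[1] f 0) := by
    refine pd_dense_ext _ ((pd_cont_iter hfc 1).sub continuous_const) 2 ?_
    intro c
    have h := pd_shift f 1 (0 : ℤ_[p]) c
    rw [zero_add] at h
    simp only [Pi.sub_apply]
    rw [h, Finset.sum_range_succ']
    simp only [Nat.choose_zero_right, one_smul, Nat.add_zero]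
    rw [add_sub_cancel_right]
    refine Finset.dvd_sum fun i _ => ?_
    rw [nsmul_eq_mul]
    exact ((pow_dvd_pow _ (show 2 ≤ 1 + (i + 1) by omega)).trans (hdvd (1 + (i + 1)) 0)).mul_left _
  intro s
  obtain ⟨w, hw⟩ := hcong s
  have hds : fwdDiff (1 : ℤ_[p]) f s = (p : ℤ_[p]) * u + (p : ℤ_[p]) ^ 2 * w := by
    have h2 : (fwdDiff (1 : ℤ_[p]))^[1] f s
        = (fwdDiff (1 : ℤ_[p]))^[1] f 0 + (p : ℤ_[p]) ^ 2 * w := by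
      rw [← hw]; ring
    rw [Function.iterate_one] at h2 h1
    rw [h2, h1]
  have hpu : ‖(p : ℤ_[p]) * u‖ = (p : ℝ) ^ (-1 : ℤ) := by
    rw [norm_mul, PadicInt.isUnit_iff.mp hu, mul_one, PadicInt.norm_p, zpow_neg_one]
  have hlt : ‖(p : ℤ_[p]) ^ 2 * w‖ < ‖(p : ℤ_[p]) * u‖ := by
    rw [hpu]
    calc ‖(p : ℤ_[p]) ^ 2 * w‖ ≤ (p : ℝ) ^ (-2 : ℤ) := by
          have hdd : (p : ℤ_[p]) ^ 2 ∣ (p : ℤ_[p]) ^ 2 * w := Dvd.intro _ rfl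
          simpa using pd_dvd_iff_norm_le.mp hdd
    _ < (p : ℝ) ^ (-1 : ℤ) := pd_zpow_lt (by omega)
  rw [hds, pd_add_norm_eq hlt, hpu]

private lemma pd_D2all {f : ℤ_[p] → ℤ_[p]} (hfc : Continuous f)
    (hdvd : ∀ (n : ℕ) (s : ℤ_[p]), (p : ℤ_[p]) ^ n ∣ (fwdDiff (1 : ℤ_[p]))^[n] f s)
    (h2 : (p : ℤ_[p]) ^ 3 ∣ (fwdDiff (1 : ℤ_[p]))^[2] f 0) :
    ∀ s : ℤ_[p], (p : ℤ_[p]) ^ 3 ∣ (fwdDiff (1 : ℤ_[p]))^[2] f s := by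
  refine pd_dense_ext _ (pd_cont_iter hfc 2) 3 ?_
  intro c
  have h := pd_shift f 2 (0 : ℤ_[p]) c
  rw [zero_add] at h
  rw [h, Finset.sum_range_succ']
  simp only [Nat.choose_zero_right, one_smul, Nat.add_zero]
  refine dvd_add (Finset.dvd_sum fun i _ => ?_) h2
  rw [nsmul_eq_mul]
  exact ((pow_dvd_pow _ (show 3 ≤ 2 + (i + 1) by omega)).trans (hdvd (2 + (i + 1)) 0)).mul_left _

lemma deltaH_eq_fwdDiff (f : ℤ_[p] → ℤ_[p]) (n : ℕ) (s : ℤ_[p]) :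
    deltaH p 1 f n s = (fwdDiff (1 : ℤ_[p]))^[n] f s := by
  rw [fwdDiff_iter_eq_sum_shift, deltaH]
  refine Finset.sum_congr rfl fun k _ => ?_
  have harg : s + (k : ℤ_[p]) * ((1 : ℕ) : ℤ_[p]) = s + k • (1 : ℤ_[p]) := by simp
  rw [harg, zsmul_eq_mul]
  push_cast
  ring

end helpers

theorem stmt5 (p : ℕ) [Fact p.Prime] (f : ℤ_[p] → ℤ_[p]) (hf : KS2 p f)
    (h1 : ∃ u : ℤ_[p], IsUnit u ∧ deltaH p 1 f 1 0 = (p : ℤ_[p]) * u)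
    (h2 : p = 2 → (p : ℤ_[p]) ^ 3 ∣ deltaH p 1 f 2 0) :
    ∀ s t : ℤ_[p], ‖f s - f t‖ = (p : ℝ)⁻¹ * ‖s - t‖ := by
  have hppr : p.Prime := Fact.out
  obtain ⟨hfc, hdvd'⟩ := hf
  have hdvd : ∀ (n : ℕ) (s : ℤ_[p]), (p : ℤ_[p]) ^ n ∣ (fwdDiff (1 : ℤ_[p]))^[n] f s := by
    intro n s
    have := hdvd' n s
    rwa [deltaH_eq_fwdDiff] at this
  obtain ⟨u, hu, h1⟩ := h1
  rw [deltaH_eq_fwdDiff] at h1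
  have hD1 := pd_D1_norm hfc hdvd u hu h1
  have hD2 : p = 2 → ∀ s : ℤ_[p], (p : ℤ_[p]) ^ 3 ∣ (fwdDiff (1 : ℤ_[p]))^[2] f s := by
    intro hp2
    refine pd_D2all hfc hdvd ?_
    have := h2 hp2
    rwa [deltaH_eq_fwdDiff] at this
  intro s t
  rcases eq_or_ne s t with rfl | hne
  · simp
  have hd0 : s - t ≠ 0 := sub_ne_zero.mpr hne
  have hdpos : (0 : ℝ) < ‖s - t‖ := norm_pos_iff.mpr hd0
  have hppos : (0 : ℝ) < (p : ℝ) ^ (-2 : ℤ) := zpow_pos (by exact_mod_cast hppr.pos) _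
  obtain ⟨c, hc⟩ := PadicInt.denseRange_natCast.exists_dist_lt (s - t) (mul_pos hdpos hppos)
  rw [dist_eq_norm] at hc
  have hlt1 : ‖s - t - (c : ℤ_[p])‖ < ‖s - t‖ := by
    have h01 : (p : ℝ) ^ (-2 : ℤ) < 1 := by
      have := pd_zpow_lt (p := p) (a := -2) (b := 0) (by omega)
      simpa using this
    nlinarith [hc]
  have hcnorm : ‖(c : ℤ_[p])‖ = ‖s - t‖ := by
    have h := pd_add_norm_eq (a := s - t) (b := (c : ℤ_[p]) - (s - t))
      (by rw [norm_sub_rev]; exact hlt1)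
    simpa using h
  have hc0 : c ≠ 0 := by
    rintro rfl
    rw [Nat.cast_zero, norm_zero] at hcnorm
    exact hdpos.ne hcnorm
  set m := c.factorization p with hm
  have hdnorm : ‖s - t‖ = (p : ℝ) ^ (-(m : ℤ)) := by rw [← hcnorm, pd_norm_natCast hc0]
  have hdc2 : ‖s - t - (c : ℤ_[p])‖ ≤ (p : ℝ) ^ (-((m + 2 : ℕ)) : ℤ) := by
    refine le_of_lt (lt_of_lt_of_le hc (le_of_eq ?_))
    rw [hdnorm, ← zpow_add₀ pd_pRne]
    congr 1
    push_cast
    ring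
  have hlip := pd_lip hfc hdvd (m + 2) s (t + (c : ℤ_[p]))
    (by
      refine pd_dvd_iff_norm_le.mpr ?_
      have harg : s - (t + (c : ℤ_[p])) = s - t - (c : ℤ_[p]) := by ring
      rw [harg]
      exact hdc2)
  have hstep := pd_step hdvd hD1 hD2 t c hc0
  have hfinal : ‖f s - f t‖ = (p : ℝ) ^ (-(m : ℤ) - 1) := by
    have hsplit : f s - f t = (f (t + (c : ℤ_[p])) - f t) + (f s - f (t + (c : ℤ_[p]))) := by
      ring
    rw [hsplit, pd_add_norm_eq ?_, hstep]
    calc ‖f s - f (t + (c : ℤ_[p]))‖ ≤ (p : ℝ) ^ (-(m + 2 + 1 : ℕ) : ℤ) := hlip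
    _ < (p : ℝ) ^ (-(m : ℤ) - 1) := pd_zpow_lt (by push_cast; omega)
    _ = ‖f (t + (c : ℤ_[p])) - f t‖ := hstep.symm
  rw [hfinal, hdnorm, ← zpow_neg_one, ← zpow_add₀ pd_pRne]
  congr 1
  ring
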